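/- The generalized translation of a monomial is τ_y x^n = Σ_{k=0}^{n} ([n]_μ!/([k]_μ! [n−k]_μ!)) x^k y^{n−k}. -/

import Mathlib

/-- The Dunkl operator `D_μ f(x) = f'(x) + μ (f(x) - f(-x))/x`. -/
noncomputable def dunkl (μ : ℝ) (f : ℝ → ℝ) (x : ℝ) : ℝ :=
  deriv f x + μ * (f x - f (-x)) / x

/-- The deformed integer `[n]_μ = n + μ (1 - (-1)^n)`. -/
noncomputable def dIdx (μ : ℝ) (n : ℕ) : ℝ := n + μ * (1 - (-1 : ℝ) ^ n)

/-- The deformed factorial `[n]_μ!`. -/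
noncomputable def dFact (μ : ℝ) : ℕ → ℝ
  | 0 => 1
  | n + 1 => dIdx μ (n + 1) * dFact μ n

/-- The generalized translation `τ_y f = Σ_{k≥0} (y^k/[k]_μ!) D_μ^k f`. -/
noncomputable def tau (μ : ℝ) (y : ℝ) (f : ℝ → ℝ) (x : ℝ) : ℝ :=
  ∑' k : ℕ, (y ^ k / dFact μ k) * ((dunkl μ)^[k] f x)

noncomputable def dc (μ : ℝ) (n : ℕ) : ℕ → ℝ
  | 0 => 1
  | k + 1 => dIdx μ (n - k) * dc μ n k

lemma dIdx_pos (μ : ℝ) (hμ : 0 ≤ μ) {m : ℕ} (hm : 0 < m) : 0 < dIdx μ m := by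
  have hm' : (1:ℝ) ≤ m := by exact_mod_cast hm
  rcases Nat.even_or_odd m with h | h <;>
    simp [dIdx, h.neg_one_pow] <;> nlinarith

lemma dFact_pos (μ : ℝ) (hμ : 0 ≤ μ) (n : ℕ) : 0 < dFact μ n := by
  induction n with
  | zero => norm_num [dFact]
  | succ k ih => exact mul_pos (dIdx_pos μ hμ k.succ_pos) ih

lemma dunkl_congr (μ : ℝ) {f g : ℝ → ℝ} (h : ∀ t : ℝ, t ≠ 0 → f t = g t)
    {x : ℝ} (hx : x ≠ 0) : dunkl μ f x = dunkl μ g x := by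
  have hd : deriv f x = deriv g x := by
    apply Filter.EventuallyEq.deriv_eq
    exact Filter.eventually_of_mem (isOpen_compl_singleton.mem_nhds hx) h
  rw [dunkl, dunkl, hd, h x hx, h (-x) (neg_ne_zero.mpr hx)]

lemma dunkl_mono (μ c : ℝ) (m : ℕ) {x : ℝ} (hx : x ≠ 0) :
    dunkl μ (fun t => c * t ^ m) x = c * dIdx μ m * x ^ (m - 1) := by
  have hderiv : deriv (fun t : ℝ => c * t ^ m) x = c * (m * x ^ (m - 1)) := by
    simp [deriv_const_mul, deriv_pow]
  rw [dunkl, hderiv]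
  cases m with
  | zero => simp [dIdx]
  | succ s =>
      have : (-x) ^ (s+1) = (-1:ℝ)^(s+1) * x^(s+1) := by rw [neg_pow]
      rw [this, dIdx]
      simp only [Nat.add_sub_cancel]
      rw [pow_succ]
      field_simp

lemma iter_mono (μ : ℝ) (n k : ℕ) {x : ℝ} (hx : x ≠ 0) :
    (dunkl μ)^[k] (fun t => t ^ n) x = dc μ n k * x ^ (n - k) := by
  induction k generalizing x with
  | zero => simp [dc]
  | succ k ih =>
      rw [Function.iterate_succ_apply']
      have h1 : dunkl μ ((dunkl μ)^[k] (fun t => t ^ n)) x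
          = dunkl μ (fun t => dc μ n k * t ^ (n - k)) x :=
        dunkl_congr μ (fun t ht => ih ht) hx
      rw [h1, dunkl_mono μ _ _ hx, dc]
      have : n - (k + 1) = (n - k) - 1 := by omega
      rw [this]; ring

lemma dc_mul_dFact (μ : ℝ) {n k : ℕ} (h : k ≤ n) :
    dc μ n k * dFact μ (n - k) = dFact μ n := by
  induction k with
  | zero => simp [dc]
  | succ k ih =>
      have hk : k ≤ n := le_of_lt (Nat.lt_of_succ_le h)
      have hnk : n - k = (n - (k+1)) + 1 := by omega
      have hstep : dFact μ (n - k) = dIdx μ (n - k) * dFact μ (n - (k+1)) := by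
        rw [hnk, dFact, ← hnk]
      rw [dc, ← ih hk, hstep]
      ring

lemma dc_eq_zero (μ : ℝ) {n k : ℕ} (h : n < k) : dc μ n k = 0 := by
  induction k with
  | zero => omega
  | succ k ih =>
      rcases Nat.lt_or_ge n k with h' | h'
      · rw [dc, ih h', mul_zero]
      · have : n = k := by omega
        rw [dc, this, Nat.sub_self]
        simp [dIdx]


/-- `τ_y x^n = Σ_{k=0}^n ([n]_μ!/([k]_μ! [n-k]_μ!)) x^k y^(n-k)`. -/
theorem tau_monomial (μ : ℝ) (hμ : 0 ≤ μ) (n : ℕ) (x y : ℝ) (hx : x ≠ 0) :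
    tau μ y (fun t => t ^ n) x =
      ∑ k ∈ Finset.range (n + 1),
        (dFact μ n / (dFact μ k * dFact μ (n - k))) * x ^ k * y ^ (n - k) := by
  have key : tau μ y (fun t => t ^ n) x
      = ∑' k : ℕ, (y ^ k / dFact μ k) * (dc μ n k * x ^ (n - k)) := by
    unfold tau
    exact tsum_congr fun k => by rw [iter_mono μ n k hx]
  rw [key]
  rw [tsum_eq_sum (s := Finset.range (n + 1)) (by
    intro k hk
    have : n < k := by simp [Finset.mem_range] at hk; omega
    rw [dc_eq_zero μ this]
    ring)]
  rw [← Finset.sum_range_reflect (fun k =>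
    (dFact μ n / (dFact μ k * dFact μ (n - k))) * x ^ k * y ^ (n - k)) (n+1)]
  apply Finset.sum_congr rfl
  intro k hk
  have hkn : k ≤ n := Nat.lt_succ_iff.mp (Finset.mem_range.mp hk)
  have h1 : n + 1 - 1 - k = n - k := by omega
  have h2 : n - (n - k) = k := by omega
  rw [h1, h2]
  have hF1 : dFact μ k ≠ 0 := (dFact_pos μ hμ k).ne'
  have hF2 : dFact μ (n - k) ≠ 0 := (dFact_pos μ hμ (n - k)).ne'
  have hdc : dc μ n k = dFact μ n / dFact μ (n - k) := by
    field_simp [← dc_mul_dFact μ hkn]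
    exact dc_mul_dFact μ hkn
  rw [hdc]
  field_simp
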